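/- Let H^MPS_{D,m} ⊆ ((Fin m → Fin d) → ℂ) be the ℂ-linear span of all m-site matrix product states ψ(ω,A,m) with ω ∈ M_D(ℂ) and A : Fin d → M_D(ℂ). Then dim_ℂ H^MPS_{D,m} ≤ D² · binom(m + dD² − 1, dD² − 1). In particular, for fixed d and D this dimension is bounded by a polynomial in m, whereas the ambient space has dimension d^m. -/

import Mathlib

open Matrix

/-- The ordered matrix product `A_{i_1} ⋯ A_{i_n}` associated to an index string `i`. -/
noncomputable def mpsProd {d D n : ℕ} (A : Fin d → Matrix (Fin D) (Fin D) ℂ)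
    (i : Fin n → Fin d) : Matrix (Fin D) (Fin D) ℂ :=
  ((List.finRange n).map fun t => A (i t)).prod

/-- The matrix product state `ψ(ω,A,n)`, as a vector of `(ℂ^d)^{⊗n}` modeled by
the function space `(Fin n → Fin d) → ℂ`. -/
noncomputable def mps {d D n : ℕ} (ω : Matrix (Fin D) (Fin D) ℂ)
    (A : Fin d → Matrix (Fin D) (Fin D) ℂ) : (Fin n → Fin d) → ℂ :=
  fun i => (ω * mpsProd A i).trace

/-- generic matrix with polynomial-variable entries -/
noncomputable def genM (d D : ℕ) (j : Fin d) :
    Matrix (Fin D) (Fin D) (MvPolynomial (Fin d × Fin D × Fin D) ℂ) :=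
  Matrix.of fun a b => MvPolynomial.X (j, a, b)

noncomputable def genProd {d D : ℕ} (n : ℕ) (i : Fin n → Fin d) :
    Matrix (Fin D) (Fin D) (MvPolynomial (Fin d × Fin D × Fin D) ℂ) :=
  ((List.finRange n).map fun t => genM d D (i t)).prod

lemma genProd_zero {d D : ℕ} (i : Fin 0 → Fin d) : genProd (D := D) 0 i = 1 := by
  simp [genProd]

lemma genProd_succ {d D n : ℕ} (i : Fin (n + 1) → Fin d) :
    genProd (D := D) (n + 1) i = genM d D (i 0) * genProd n (i ∘ Fin.succ) := by
  simp [genProd, List.finRange_succ, List.map_map, Function.comp_def]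

lemma mpsProd_zero {d D : ℕ} (A : Fin d → Matrix (Fin D) (Fin D) ℂ) (i : Fin 0 → Fin d) :
    mpsProd A i = 1 := by simp [mpsProd]

lemma mpsProd_succ {d D n : ℕ} (A : Fin d → Matrix (Fin D) (Fin D) ℂ)
    (i : Fin (n + 1) → Fin d) :
    mpsProd A i = A (i 0) * mpsProd A (i ∘ Fin.succ) := by
  simp [mpsProd, List.finRange_succ, List.map_map, Function.comp_def]

lemma genProd_isHomogeneous {d D : ℕ} :
    ∀ (n : ℕ) (i : Fin n → Fin d) (a b : Fin D),
      ((genProd (D := D) n i) a b).IsHomogeneous n := by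
  intro n
  induction n with
  | zero =>
    intro i a b
    rw [genProd_zero, Matrix.one_apply]
    split
    · exact MvPolynomial.isHomogeneous_one _ _
    · exact MvPolynomial.isHomogeneous_zero _ _ _
  | succ n ih =>
    intro i a b
    rw [genProd_succ, Matrix.mul_apply]
    apply MvPolynomial.IsHomogeneous.sum
    intro c _
    have h1 : ((genM d D (i 0)) a c).IsHomogeneous 1 := MvPolynomial.isHomogeneous_X _ _
    have := h1.mul (ih (i ∘ Fin.succ) c b)
    simpa [add_comm] using this

lemma mpsProd_eq_eval {d D : ℕ} (A : Fin d → Matrix (Fin D) (Fin D) ℂ) :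
    ∀ (n : ℕ) (i : Fin n → Fin d),
      mpsProd A i = (genProd n i).map
        (MvPolynomial.eval fun v : Fin d × Fin D × Fin D => A v.1 v.2.1 v.2.2) := by
  intro n
  induction n with
  | zero =>
    intro i
    rw [mpsProd_zero, genProd_zero]
    exact (Matrix.map_one _ (map_zero _) (map_one _)).symm
  | succ n ih =>
    intro i
    rw [mpsProd_succ, genProd_succ, Matrix.map_mul (f := MvPolynomial.eval _), ← ih]
    congr 1
    ext a b
    simp [genM]

/-- The dimension of the span of `m`-site matrix product states of bond dimension `D`
is at most `D² · binom(m + dD² − 1, dD² − 1)`. -/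
theorem stmt3 (d D m : ℕ) (hd : 0 < d) (hD : 0 < D) :
    Module.finrank ℂ
      ↥(Submodule.span ℂ (Set.range fun ωA :
          Matrix (Fin D) (Fin D) ℂ × (Fin d → Matrix (Fin D) (Fin D) ℂ) =>
            mps (n := m) ωA.1 ωA.2))
      ≤ D ^ 2 * Nat.choose (m + d * D ^ 2 - 1) (d * D ^ 2 - 1) := by
  classical
  set σ := (Fin d × Fin D × Fin D)
  set ι := (Fin D × Fin D) × Sym σ m with hι
  set c : ι → ((Fin m → Fin d) → ℂ) := fun x i =>
    MvPolynomial.coeff (Multiset.toFinsupp (x.2 : Multiset σ)) ((genProd m i) x.1.2 x.1.1)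
    with hc
  -- evaluation of a homogeneous polynomial as a sum over Sym
  have keyeval : ∀ (f : σ → ℂ) (p : MvPolynomial σ ℂ), p.IsHomogeneous m →
      MvPolynomial.eval f p = ∑ s : Sym σ m,
        MvPolynomial.coeff (Multiset.toFinsupp (s : Multiset σ)) p *
          (Multiset.toFinsupp (s : Multiset σ)).prod (fun v k => f v ^ k) := by
    intro f p hp
    set g : Sym σ m → (σ →₀ ℕ) := fun s => Multiset.toFinsupp (s : Multiset σ) with hg
    have hginj : Function.Injective g := by
      intro s t hst
      exact Sym.coe_injective (Multiset.toFinsupp.injective hst)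
    set F : (σ →₀ ℕ) → ℂ := fun e =>
      MvPolynomial.coeff e p * e.prod (fun v k => f v ^ k) with hF
    have h1 : MvPolynomial.eval f p = ∑ e ∈ p.support, F e := MvPolynomial.eval_eq f p
    have h2 : ∑ s : Sym σ m, F (g s) = ∑ e ∈ Finset.univ.image g, F e :=
      (Finset.sum_image (fun s _ t _ h => hginj h)).symm
    have hsub : p.support ⊆ Finset.univ.image g := by
      intro e he
      have hco : MvPolynomial.coeff e p ≠ 0 := MvPolynomial.mem_support_iff.mp he
      have hdeg : (Finsupp.weight 1) e = m := hp hco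
      have hcard : Multiset.card (Finsupp.toMultiset e) = m := by
        rw [Finsupp.card_toMultiset]
        replace hdeg : Finsupp.degree e = m := by rw [Finsupp.degree_eq_weight_one]; exact hdeg
        simpa [Finsupp.degree_apply, Finsupp.sum] using hdeg
      refine Finset.mem_image.mpr ⟨⟨Finsupp.toMultiset e, hcard⟩, Finset.mem_univ _, ?_⟩
      simp [hg, Finsupp.toMultiset_toFinsupp]
    rw [h1, h2, Finset.sum_subset hsub]
    intro e _ he
    simp [hF, MvPolynomial.notMem_support_iff.mp he]
  -- the decomposition of mps into the fixed family c
  have hdecomp : ∀ (ω : Matrix (Fin D) (Fin D) ℂ) (A : Fin d → Matrix (Fin D) (Fin D) ℂ),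
      mps (n := m) ω A = ∑ x : ι,
        (ω x.1.1 x.1.2 *
          (Multiset.toFinsupp (x.2 : Multiset σ)).prod
            (fun v k => (A v.1 v.2.1 v.2.2) ^ k)) • c x := by
    intro ω A
    funext i
    have : mps (n := m) ω A i = ∑ a : Fin D, ∑ b : Fin D, ω a b * (mpsProd A i) b a := by
      simp [mps, Matrix.trace, Matrix.mul_apply, Matrix.diag]
    rw [this]
    have heval : ∀ a b : Fin D, (mpsProd A i) b a =
        MvPolynomial.eval (fun v : σ => A v.1 v.2.1 v.2.2) ((genProd m i) b a) := by
      intro a b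
      rw [mpsProd_eq_eval A m i]
      rfl
    simp only [Finset.sum_apply, Pi.smul_apply, smul_eq_mul]
    rw [Fintype.sum_prod_type]
    rw [Fintype.sum_prod_type]
    refine Finset.sum_congr rfl fun a _ => Finset.sum_congr rfl fun b _ => ?_
    rw [heval a b, keyeval _ _ (genProd_isHomogeneous m i b a), Finset.mul_sum]
    refine Finset.sum_congr rfl fun s _ => ?_
    simp [hc]
    ring
  -- span containment
  have hspan : Submodule.span ℂ (Set.range fun ωA :
      Matrix (Fin D) (Fin D) ℂ × (Fin d → Matrix (Fin D) (Fin D) ℂ) =>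
        mps (n := m) ωA.1 ωA.2) ≤ Submodule.span ℂ (Set.range c) := by
    rw [Submodule.span_le]
    rintro _ ⟨⟨ω, A⟩, rfl⟩
    show mps (n := m) ω A ∈ _
    rw [hdecomp ω A]
    exact Submodule.sum_mem _ fun x _ =>
      Submodule.smul_mem _ _ (Submodule.subset_span ⟨x, rfl⟩)
  haveI : Module.Finite ℂ (Submodule.span ℂ (Set.range c)) :=
    FiniteDimensional.span_of_finite ℂ (Set.finite_range c)
  have h1 := Submodule.finrank_mono hspan
  have h2 : Module.finrank ℂ (Submodule.span ℂ (Set.range c)) ≤ Fintype.card ι :=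
    finrank_range_le_card c
  refine (h1.trans h2).trans ?_
  have hcard : Fintype.card ι = (D * D) * Fintype.card (Sym σ m) := by
    simp [hι, Fintype.card_prod]
  rw [hcard, Sym.card_sym_eq_choose]
  have hσ : Fintype.card σ = d * D ^ 2 := by
    simp only [σ, Fintype.card_prod, Fintype.card_fin]
    ring
  rw [hσ]
  have hN : 1 ≤ d * D ^ 2 := by
    have := Nat.mul_le_mul hd (Nat.one_le_pow 2 D hD)
    simpa using this
  have hsymm : (d * D ^ 2 + m - 1).choose m = (m + d * D ^ 2 - 1).choose (d * D ^ 2 - 1) := by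
    have h3 : m ≤ m + d * D ^ 2 - 1 := by omega
    have := Nat.choose_symm h3
    have h4 : m + d * D ^ 2 - 1 - m = d * D ^ 2 - 1 := by omega
    rw [h4] at this
    have h5 : d * D ^ 2 + m - 1 = m + d * D ^ 2 - 1 := by omega
    rw [h5]
    exact this.symm
  rw [hsymm]
  have : D * D = D ^ 2 := by ring
  rw [this]
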